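/- arXiv:1210.7257 — 3 statements merged into one kernel-verified Lean document; each statement's English description precedes it below -/
import Mathlib

section
/- Let μ be a probability measure on [0,1] with μ({1}) = 0 such that 𝕋μ ∈ L_q([0,1]). Then for every Z ∈ L_p([0,1]) one has ∫₀¹ AV@R_α(Z) dμ(α) = ∫₀¹ (𝕋μ)(τ) F_Z^{-1}(τ) dτ. -/
open MeasureTheory Set Filter Topology
open scoped ENNReal

noncomputable section

/-- The standard probability space: the uniform (Lebesgue) probability measure on `[0,1] ⊆ ℝ`. -/
def stdP : Measure ℝ := volume.restrict (Icc (0:ℝ) 1)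

/-- Cumulative distribution function of a random variable `Z` on the standard space. -/
def cdf (Z : ℝ → ℝ) (z : ℝ) : ℝ := (stdP {ω | Z ω ≤ z}).toReal

/-- Right-side quantile function `F_Z^{-1}(τ) = sup{t : F_Z(t) ≤ τ}`. -/
def quant (Z : ℝ → ℝ) (τ : ℝ) : ℝ := sSup {t : ℝ | cdf Z t ≤ τ}

/-- Average Value-at-Risk at level `α`. -/
def avar (Z : ℝ → ℝ) (α : ℝ) : ℝ := (1 - α)⁻¹ * ∫ τ in Ioc α 1, quant Z τ

/-- The scalar product `⟨ζ, Z⟩ = ∫₀¹ ζ(τ) Z(τ) dτ`. -/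
def pairing (ζ Z : ℝ → ℝ) : ℝ := ∫ ω, ζ ω * Z ω ∂stdP

/-- Expectation w.r.t. the standard probability space. -/
def expct (Z : ℝ → ℝ) : ℝ := ∫ ω, Z ω ∂stdP

/-- `μ ∈ 𝔓`: a probability measure supported on `[0,1]` with zero mass at `{1}`. -/
def IsP01 (μ : Measure ℝ) : Prop :=
  IsProbabilityMeasure μ ∧ μ (Icc (0:ℝ) 1)ᶜ = 0 ∧ μ {(1:ℝ)} = 0

/-- cdf of a measure on ℝ. -/
def mcdf (μ : Measure ℝ) (x : ℝ) : ℝ := (μ (Iic x)).toReal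

/-- First order stochastic dominance `μ ≼ ν`, i.e. `μ(x) ≥ ν(x)` for all `x`. -/
def FSD (μ ν : Measure ℝ) : Prop := ∀ x : ℝ, mcdf ν x ≤ mcdf μ x

/-- The map `𝕋`: `(𝕋μ)(τ) = ∫_{[0,τ]} (1-α)⁻¹ dμ(α)`. -/
def Tmap (μ : Measure ℝ) (τ : ℝ) : ℝ := ∫ α in Icc (0:ℝ) τ, (1 - α)⁻¹ ∂μ

/-- Spectral function: nonnegative, nondecreasing, right-continuous on `[0,1)`,
integrating to one. -/
def IsSpectral (σ : ℝ → ℝ) : Prop :=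
  (∀ t ∈ Ico (0:ℝ) 1, 0 ≤ σ t) ∧ MonotoneOn σ (Ico (0:ℝ) 1) ∧
  (∀ t ∈ Ico (0:ℝ) 1, ContinuousWithinAt σ (Ici t) t) ∧
  (∫ t in Ioo (0:ℝ) 1, σ t) = 1

/-- An element of `L_q` is (a.e.) spectral if it has a spectral representative. -/
def IsSpectralAE (σ : ℝ → ℝ) : Prop := ∃ σ₀ : ℝ → ℝ, IsSpectral σ₀ ∧ σ =ᵐ[stdP] σ₀

/-- `∫₀¹ AV@R_α(Z) dμ(α)`. -/
def kusuokaIntegral (μ : Measure ℝ) (Z : ℝ → ℝ) : ℝ := ∫ α, avar Z α ∂μ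

/-- `∫₀¹ σ(τ) F_Z^{-1}(τ) dτ`. -/
def spectralIntegral (σ Z : ℝ → ℝ) : ℝ := ∫ t in Ioo (0:ℝ) 1, σ t * quant Z t

/-- Coherent risk measure on `L_p` of the standard space: monotone, convex,
translation equivariant and positively homogeneous. -/
def IsCoherent (p : ℝ≥0∞) (ρ : (ℝ → ℝ) → ℝ) : Prop :=
  (∀ Z Z' : ℝ → ℝ, MemLp Z p stdP → MemLp Z' p stdP →
      (∀ᵐ ω ∂stdP, Z' ω ≤ Z ω) → ρ Z' ≤ ρ Z) ∧
  (∀ Z Z' : ℝ → ℝ, ∀ t : ℝ, MemLp Z p stdP → MemLp Z' p stdP → t ∈ Icc (0:ℝ) 1 →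
      ρ (fun ω => t * Z ω + (1 - t) * Z' ω) ≤ t * ρ Z + (1 - t) * ρ Z') ∧
  (∀ Z : ℝ → ℝ, ∀ a : ℝ, MemLp Z p stdP → ρ (fun ω => Z ω + a) = ρ Z + a) ∧
  (∀ Z : ℝ → ℝ, ∀ t : ℝ, MemLp Z p stdP → 0 ≤ t → ρ (fun ω => t * Z ω) = t * ρ Z)

/-- Law invariance: distributionally equivalent random variables get the same value. -/
def IsLawInvariant (p : ℝ≥0∞) (ρ : (ℝ → ℝ) → ℝ) : Prop :=
  ∀ Z Z' : ℝ → ℝ, MemLp Z p stdP → MemLp Z' p stdP → cdf Z = cdf Z' → ρ Z = ρ Z'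

/-- `𝔐 ⊆ 𝔓` is a Kusuoka set for `ρ` : `ρ(Z) = sup_{μ∈𝔐} ∫₀¹ AV@R_α(Z) dμ(α)`. -/
def IsKusuokaSet (p : ℝ≥0∞) (ρ : (ℝ → ℝ) → ℝ) (M : Set (Measure ℝ)) : Prop :=
  (∀ μ ∈ M, IsP01 μ) ∧
  ∀ Z : ℝ → ℝ, MemLp Z p stdP →
    IsLUB {x : ℝ | ∃ μ ∈ M, x = kusuokaIntegral μ Z} (ρ Z)

/-- `Υ ⊆ 𝔖` is a generating set for `ρ` : `ρ(Z) = sup_{σ∈Υ} ∫₀¹ σ(τ) F_Z^{-1}(τ) dτ`. -/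
def IsGeneratingSet (p : ℝ≥0∞) (ρ : (ℝ → ℝ) → ℝ) (Υ : Set (ℝ → ℝ)) : Prop :=
  (∀ σ ∈ Υ, IsSpectralAE σ) ∧
  ∀ Z : ℝ → ℝ, MemLp Z p stdP →
    IsLUB {x : ℝ | ∃ σ ∈ Υ, x = spectralIntegral σ Z} (ρ Z)

/-- The dual set `𝔄 = {ζ ∈ Z* : ⟨ζ,Z⟩ ≤ ρ(Z) for all Z ∈ Z}`. -/
def dualSet (p q : ℝ≥0∞) (ρ : (ℝ → ℝ) → ℝ) : Set (ℝ → ℝ) :=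
  {ζ : ℝ → ℝ | MemLp ζ q stdP ∧ ∀ Z : ℝ → ℝ, MemLp Z p stdP → pairing ζ Z ≤ ρ Z}

/-- `Z` exposes `A` at `ζbar`: `ζ ↦ ⟨ζ,Z⟩` attains its maximum over `A`
at the unique (up to a.e. equality) point `ζbar`. -/
def Exposes (A : Set (ℝ → ℝ)) (Z ζbar : ℝ → ℝ) : Prop :=
  ζbar ∈ A ∧ (∀ ζ ∈ A, pairing ζ Z ≤ pairing ζbar Z) ∧
  ∀ ζ ∈ A, pairing ζ Z = pairing ζbar Z → ζ =ᵐ[stdP] ζbar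

/-- The set `Exp(A)` of weak* exposed points of `A`. -/
def expPoints (p : ℝ≥0∞) (A : Set (ℝ → ℝ)) : Set (ℝ → ℝ) :=
  {ζ : ℝ → ℝ | ∃ Z : ℝ → ℝ, MemLp Z p stdP ∧ Exposes A Z ζ}

/-- The weak* topology on (densities of) elements of `Z* = L_q`, induced by the
pairings against elements of `Z = L_p`. -/
def wstarTop (p : ℝ≥0∞) : TopologicalSpace (ℝ → ℝ) :=
  TopologicalSpace.induced
    (fun ζ => fun Z : {Z : ℝ → ℝ // MemLp Z p stdP} => pairing ζ Z.1)
    Pi.topologicalSpace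

/-- Weak* closure. -/
def wstarClosure (p : ℝ≥0∞) (S : Set (ℝ → ℝ)) : Set (ℝ → ℝ) :=
  @closure _ (wstarTop p) S

/-- Weak* closedness. -/
def IsWStarClosed (p : ℝ≥0∞) (S : Set (ℝ → ℝ)) : Prop :=
  @IsClosed _ (wstarTop p) S

/-- The weak topology of measures, induced by integration of bounded continuous functions. -/
def weakTopM : TopologicalSpace (Measure ℝ) :=
  TopologicalSpace.induced
    (fun μ => fun f : BoundedContinuousFunction ℝ ℝ => ∫ x, f x ∂μ)
    Pi.topologicalSpace

/-- Closure in the weak topology of measures. -/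
def weakClosureM (M : Set (Measure ℝ)) : Set (Measure ℝ) := @closure _ weakTopM M

/-- Closure within `𝔓` (in the weak topology of measures). -/
def closureP (M : Set (Measure ℝ)) : Set (Measure ℝ) := weakClosureM M ∩ {μ | IsP01 μ}

/-- Closedness within `𝔓`. -/
def IsClosedInP (M : Set (Measure ℝ)) : Prop := closureP M ⊆ M

/-- The minimal Kusuoka set: a closed Kusuoka set contained in every closed Kusuoka set. -/
def IsMinimalKusuoka (p : ℝ≥0∞) (ρ : (ℝ → ℝ) → ℝ) (M : Set (Measure ℝ)) : Prop :=
  IsKusuokaSet p ρ M ∧ IsClosedInP M ∧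
  ∀ M' : Set (Measure ℝ), IsKusuokaSet p ρ M' → IsClosedInP M' → M ⊆ M'

/-- Measure-preserving transformations of `[0,1]`: bijections of `[0,1]` with
`P(T(A)) = P(A)` for all measurable `A`. -/
def IsMPT (T : ℝ → ℝ) : Prop :=
  Measurable T ∧ BijOn T (Icc (0:ℝ) 1) (Icc (0:ℝ) 1) ∧
  ∀ A : Set ℝ, MeasurableSet A → stdP (T '' A) = stdP A


/-! ### Auxiliary lemmas -/

lemma stdP_prob : IsProbabilityMeasure stdP := by
  constructor
  simp [stdP, Real.volume_Icc]

lemma stdP_eq_Ioo : stdP = volume.restrict (Ioo (0:ℝ) 1) :=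
  (Measure.restrict_congr_set Ioo_ae_eq_Icc).symm

lemma ae_mem_Ioo_stdP : ∀ᵐ τ ∂stdP, τ ∈ Ioo (0:ℝ) 1 := by
  rw [stdP_eq_Ioo]
  exact ae_restrict_mem measurableSet_Ioo

section QuantAux

variable {W : ℝ → ℝ}

lemma cdf_eq_cdf_map (hW : Measurable W) (z : ℝ) :
    cdf W z = ProbabilityTheory.cdf (stdP.map W) z := by
  haveI := stdP_prob
  haveI : IsProbabilityMeasure (stdP.map W) := Measure.isProbabilityMeasure_map hW.aemeasurable
  rw [ProbabilityTheory.cdf_eq_real, measureReal_def, Measure.map_apply hW measurableSet_Iic]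
  rfl

lemma cdf_mono (hW : Measurable W) : Monotone (cdf W) := by
  haveI := stdP_prob
  intro a b hab
  rw [cdf_eq_cdf_map hW, cdf_eq_cdf_map hW]
  exact (ProbabilityTheory.cdf _).mono hab

lemma quantSet_nonempty (hW : Measurable W) {τ : ℝ} (hτ : 0 < τ) :
    {t : ℝ | cdf W t ≤ τ}.Nonempty := by
  haveI := stdP_prob
  haveI : IsProbabilityMeasure (stdP.map W) := Measure.isProbabilityMeasure_map hW.aemeasurable
  have h : ∀ᶠ t in atBot, ProbabilityTheory.cdf (stdP.map W) t < τ :=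
    (ProbabilityTheory.tendsto_cdf_atBot (stdP.map W)).eventually_lt_const hτ
  obtain ⟨t, ht⟩ := h.exists
  exact ⟨t, by rw [mem_setOf_eq, cdf_eq_cdf_map hW]; exact ht.le⟩

lemma quantSet_bddAbove (hW : Measurable W) {τ : ℝ} (hτ : τ < 1) :
    BddAbove {t : ℝ | cdf W t ≤ τ} := by
  haveI := stdP_prob
  haveI : IsProbabilityMeasure (stdP.map W) := Measure.isProbabilityMeasure_map hW.aemeasurable
  have h : ∀ᶠ t in atTop, τ < ProbabilityTheory.cdf (stdP.map W) t :=
    (ProbabilityTheory.tendsto_cdf_atTop (stdP.map W)).eventually_const_lt hτ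
  obtain ⟨T, hT⟩ := h.exists
  refine ⟨T, fun t ht => ?_⟩
  by_contra hc
  push_neg at hc
  have : cdf W T ≤ cdf W t := cdf_mono hW hc.le
  rw [cdf_eq_cdf_map hW] at this
  have := lt_of_lt_of_le hT this
  rw [mem_setOf_eq] at ht
  linarith

lemma quant_le_of_lt_cdf (hW : Measurable W) {τ z : ℝ} (hτ0 : 0 < τ) (h : τ < cdf W z) :
    quant W τ ≤ z := by
  refine csSup_le (quantSet_nonempty hW hτ0) (fun t ht => ?_)
  by_contra hzt
  push_neg at hzt
  have : cdf W z ≤ cdf W t := cdf_mono hW hzt.le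
  rw [mem_setOf_eq] at ht
  linarith

lemma le_cdf_of_quant_le (hW : Measurable W) {τ z : ℝ} (hτ1 : τ < 1)
    (h : quant W τ ≤ z) : τ ≤ cdf W z := by
  haveI := stdP_prob
  haveI : IsProbabilityMeasure (stdP.map W) := Measure.isProbabilityMeasure_map hW.aemeasurable
  by_contra hc
  push_neg at hc
  have hrc : Tendsto (cdf W) (𝓝[>] z) (𝓝 (cdf W z)) := by
    have h1 := ((ProbabilityTheory.cdf (stdP.map W)).right_continuous z).tendsto
    have h2 : Tendsto (ProbabilityTheory.cdf (stdP.map W)) (𝓝[>] z)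
        (𝓝 (ProbabilityTheory.cdf (stdP.map W) z)) :=
      h1.mono_left (nhdsWithin_mono z Ioi_subset_Ici_self)
    have : cdf W = fun t => ProbabilityTheory.cdf (stdP.map W) t := funext (cdf_eq_cdf_map hW)
    rw [this]
    exact h2
  have hev : ∀ᶠ t in 𝓝[>] z, cdf W t < τ := hrc.eventually_lt_const hc
  obtain ⟨t, htτ, htz⟩ := (hev.and eventually_mem_nhdsWithin).exists
  have hts : t ∈ {t : ℝ | cdf W t ≤ τ} := htτ.le
  have := le_csSup (quantSet_bddAbove hW hτ1) hts
  have : t ≤ z := le_trans this h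
  exact absurd htz (not_lt.mpr this)

lemma quant_monotoneOn (hW : Measurable W) : MonotoneOn (quant W) (Ioo (0:ℝ) 1) := by
  intro a ha b hb hab
  exact csSup_le_csSup (quantSet_bddAbove hW hb.2) (quantSet_nonempty hW ha.1)
    (fun t ht => le_trans ht hab)

lemma quant_aemeasurable (hW : Measurable W) : AEMeasurable (quant W) stdP := by
  rw [stdP_eq_Ioo]
  exact aemeasurable_restrict_of_monotoneOn measurableSet_Ioo (quant_monotoneOn hW)

lemma map_quant_eq (hW : Measurable W) : stdP.map (quant W) = stdP.map W := by
  haveI := stdP_prob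
  haveI : IsProbabilityMeasure (stdP.map W) := Measure.isProbabilityMeasure_map hW.aemeasurable
  haveI : IsProbabilityMeasure (stdP.map (quant W)) :=
    Measure.isProbabilityMeasure_map (quant_aemeasurable hW)
  refine Measure.ext_of_Iic _ _ (fun z => ?_)
  rw [Measure.map_apply_of_aemeasurable (quant_aemeasurable hW) measurableSet_Iic,
      Measure.map_apply hW measurableSet_Iic]
  set Fz := cdf W z with hFz
  have hF1 : Fz ≤ 1 := by
    rw [hFz, cdf_eq_cdf_map hW]; exact ProbabilityTheory.cdf_le_one _ z
  have hμz : stdP (W ⁻¹' Iic z) = ENNReal.ofReal Fz :=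
    (ENNReal.ofReal_toReal (measure_ne_top _ _)).symm
  rw [stdP_eq_Ioo, Measure.restrict_apply' measurableSet_Ioo]
  have hup : (quant W ⁻¹' Iic z ∩ Ioo 0 1) ⊆ Ioc 0 Fz := by
    rintro τ ⟨h1, h2⟩
    exact ⟨h2.1, le_cdf_of_quant_le hW h2.2 h1⟩
  have hlo : Ioo 0 (min Fz 1) ⊆ quant W ⁻¹' Iic z ∩ Ioo 0 1 := by
    rintro τ ⟨h1, h2⟩
    exact ⟨quant_le_of_lt_cdf hW h1 (lt_of_lt_of_le h2 (min_le_left _ _)),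
      h1, lt_of_lt_of_le h2 (min_le_right _ _)⟩
  have hvol : volume (quant W ⁻¹' Iic z ∩ Ioo 0 1) = ENNReal.ofReal Fz := by
    apply le_antisymm
    · calc volume (quant W ⁻¹' Iic z ∩ Ioo 0 1) ≤ volume (Ioc 0 Fz) := measure_mono hup
        _ = ENNReal.ofReal Fz := by rw [Real.volume_Ioc, sub_zero]
    · calc ENNReal.ofReal Fz = volume (Ioo 0 (min Fz 1)) := by
            rw [Real.volume_Ioo, sub_zero, min_eq_left hF1]
        _ ≤ volume (quant W ⁻¹' Iic z ∩ Ioo 0 1) := measure_mono hlo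
  rw [hvol, ← hμz]
  rw [stdP_eq_Ioo]

lemma memLp_quant {r : ℝ≥0∞} (hW : Measurable W) (h : MemLp W r stdP) :
    MemLp (quant W) r stdP := by
  haveI := stdP_prob
  have h1 : MemLp (id : ℝ → ℝ) r (stdP.map W) :=
    (memLp_map_measure_iff aestronglyMeasurable_id hW.aemeasurable).mpr h
  rw [← map_quant_eq hW] at h1
  exact (memLp_map_measure_iff aestronglyMeasurable_id (quant_aemeasurable hW)).mp h1

end QuantAux

lemma integrable_mul_of_memLp {r s : ℝ≥0∞} (hrs : 1 / r + 1 / s = 1) {f g : ℝ → ℝ}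
    (hf : MemLp f r stdP) (hg : MemLp g s stdP) :
    Integrable (fun x => f x * g x) stdP := by
  rw [← memLp_one_iff_integrable]
  refine ⟨hf.1.mul hg.1, ?_⟩
  have h : (1 : ℝ≥0∞) / 1 = 1 / r + 1 / s := by rw [hrs]; norm_num
  have hfg : (f • g) = fun x => f x * g x := by
    funext x; simp [smul_eq_mul]
  calc eLpNorm (fun x => f x * g x) 1 stdP = eLpNorm (f • g) 1 stdP := by rw [hfg]
    _ ≤ eLpNorm f r stdP * eLpNorm g s stdP := eLpNorm_smul_le_mul_eLpNorm hg.1 hf.1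
        (hpqr := ⟨by simpa [one_div, eq_comm] using h⟩)
    _ < ⊤ := ENNReal.mul_lt_top hf.2 hg.2

/-- For `μ ∈ 𝔓` with `𝕋μ ∈ L_q([0,1])` and every `Z ∈ L_p([0,1])`,
`∫₀¹ AV@R_α(Z) dμ(α) = ∫₀¹ (𝕋μ)(τ) F_Z^{-1}(τ) dτ`. -/
theorem kusuoka_integral_eq_spectral_integral
    (p q : ℝ≥0∞) (hp : 1 ≤ p) (hp' : p ≠ ∞) (hpq : 1 / p + 1 / q = 1)
    (μ : Measure ℝ) (hμ : IsP01 μ) (hTμ : MemLp (Tmap μ) q stdP)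
    (Z : ℝ → ℝ) (hZ : MemLp Z p stdP) :
    kusuokaIntegral μ Z = spectralIntegral (Tmap μ) Z := by
  haveI := stdP_prob
  haveI : IsProbabilityMeasure μ := hμ.1
  obtain ⟨hμprob, hμc, hμ1⟩ := hμ
  -- a measurable representative of `Z`
  set W := hZ.1.mk Z with hWdef
  have hWm : Measurable W := hZ.1.stronglyMeasurable_mk.measurable
  have hZW : Z =ᵐ[stdP] W := hZ.1.ae_eq_mk
  have hcdf : cdf Z = cdf W := by
    funext z
    have hset : {ω | Z ω ≤ z} =ᵐ[stdP] {ω | W ω ≤ z} := by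
      filter_upwards [hZW] with ω hω
      show (Z ω ≤ z) = (W ω ≤ z)
      rw [hω]
    exact congrArg ENNReal.toReal (measure_congr hset)
  have hquant : quant Z = quant W := by
    funext τ
    simp only [quant, hcdf]
  have hWp : MemLp W p stdP := hZ.ae_eq hZW
  have hqm : AEMeasurable (quant W) stdP := quant_aemeasurable hWm
  have hqℒp : MemLp (quant W) p stdP := memLp_quant hWm hWp
  -- support facts for μ
  have hIco : μ (Ico (0:ℝ) 1)ᶜ = 0 := by
    refine measure_mono_null ?_ (measure_union_null hμc hμ1)
    intro x hx
    simp only [mem_compl_iff, mem_Ico, not_and, not_lt] at hx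
    by_cases h : x ∈ Icc (0:ℝ) 1
    · exact Or.inr (le_antisymm h.2 (hx h.1))
    · exact Or.inl h
  have hμres : μ.restrict (Ico (0:ℝ) 1) = μ := by
    have h : Ico (0:ℝ) 1 =ᵐ[μ] univ := ae_eq_univ.mpr hIco
    rw [Measure.restrict_congr_set h, Measure.restrict_univ]
  have hαae : ∀ᵐ α ∂μ, α ∈ Ico (0:ℝ) 1 := by
    rw [ae_iff]
    exact hIco
  -- the Fubini kernel
  set S : Set (ℝ × ℝ) := {pr : ℝ × ℝ | pr.1 ≤ pr.2} with hSdef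
  have hS : MeasurableSet S := measurableSet_le measurable_fst measurable_snd
  set G : ℝ × ℝ → ℝ := S.indicator (fun pr => (1 - pr.1)⁻¹ * quant W pr.2) with hGdef
  have hG_right : ∀ α : ℝ, (fun τ => G (α, τ))
      = Set.indicator (Ici α) (fun τ => (1 - α)⁻¹ * quant W τ) := by
    intro α
    funext τ
    simp only [hGdef, hSdef, Set.indicator_apply, mem_setOf_eq, mem_Ici]
  have hG_left : ∀ τ : ℝ, (fun α => G (α, τ))
      = Set.indicator (Iic τ) (fun α => (1 - α)⁻¹ * quant W τ) := by
    intro τ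
    funext α
    simp only [hGdef, hSdef, Set.indicator_apply, mem_setOf_eq, mem_Iic]
  have h1m : Measurable (fun α : ℝ => (1 - α)⁻¹) :=
    (measurable_const.sub measurable_id).inv
  have hGm : AEStronglyMeasurable G (μ.prod stdP) := by
    have h2 : AEMeasurable (fun pr : ℝ × ℝ => quant W pr.2) (μ.prod stdP) :=
      hqm.comp_quasiMeasurePreserving Measure.quasiMeasurePreserving_snd
    have h1 : Measurable (fun pr : ℝ × ℝ => (1 - pr.1)⁻¹) :=
      (measurable_const.sub measurable_fst).inv
    exact ((h1.aemeasurable.mul h2).aestronglyMeasurable).indicator hS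
  -- restriction identities
  have hres1 : ∀ τ ∈ Ioo (0:ℝ) 1, μ.restrict (Iic τ) = μ.restrict (Icc 0 τ) := by
    intro τ hτ
    conv_lhs => rw [← hμres]
    rw [Measure.restrict_restrict measurableSet_Iic]
    congr 1
    ext x
    simp only [mem_inter_iff, mem_Iic, mem_Ico, mem_Icc]
    constructor
    · rintro ⟨h1, h2, h3⟩; exact ⟨h2, h1⟩
    · rintro ⟨h1, h2⟩; exact ⟨h2, h1, lt_of_le_of_lt h2 hτ.2⟩
  have hres2 : ∀ α ∈ Ico (0:ℝ) 1, stdP.restrict (Ici α) = volume.restrict (Ioc α 1) := by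
    intro α hα
    show (volume.restrict (Icc (0:ℝ) 1)).restrict (Ici α) = volume.restrict (Ioc α 1)
    rw [Measure.restrict_restrict measurableSet_Ici]
    have hs : Ici α ∩ Icc (0:ℝ) 1 = Icc α 1 := by
      ext x
      simp only [mem_inter_iff, mem_Ici, mem_Icc]
      constructor
      · rintro ⟨h1, h2, h3⟩; exact ⟨h1, h3⟩
      · rintro ⟨h1, h2⟩; exact ⟨h1, hα.1.trans h1, h2⟩
    rw [hs]
    exact (Measure.restrict_congr_set Ioc_ae_eq_Icc).symm
  -- integrability in α for fixed τ
  have hIntα : ∀ τ ∈ Ioo (0:ℝ) 1, Integrable (fun α => G (α, τ)) μ := by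
    intro τ hτ
    rw [hG_left τ, integrable_indicator_iff measurableSet_Iic, IntegrableOn, hres1 τ hτ]
    have hbd : ∀ᵐ α ∂(μ.restrict (Icc 0 τ)),
        ‖(1 - α)⁻¹ * quant W τ‖ ≤ (1 - τ)⁻¹ * ‖quant W τ‖ := by
      filter_upwards [ae_restrict_mem measurableSet_Icc] with α hα
      have h1 : (0:ℝ) < 1 - τ := by linarith [hτ.2]
      have h2 : (0:ℝ) < 1 - α := by linarith [hα.2, hτ.2]
      rw [norm_mul, Real.norm_eq_abs ((1 - α)⁻¹), abs_of_pos (inv_pos.mpr h2)]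
      have h3 : (1:ℝ) - τ ≤ 1 - α := by linarith [hα.2]
      gcongr
    exact Integrable.mono' (integrable_const _)
      ((h1m.aemeasurable.mul_const _).aestronglyMeasurable) hbd
  -- value of the inner norm-integral
  have hnorm_eq : ∀ τ ∈ Ioo (0:ℝ) 1,
      (∫ α, ‖G (α, τ)‖ ∂μ) = Tmap μ τ * ‖quant W τ‖ := by
    intro τ hτ
    have hfe : (fun α => ‖G (α, τ)‖)
        = Set.indicator (Iic τ) (fun α => ‖(1 - α)⁻¹ * quant W τ‖) := by
      funext α
      rw [show G (α, τ) = Set.indicator (Iic τ) (fun α => (1 - α)⁻¹ * quant W τ) α from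
        congrFun (hG_left τ) α, norm_indicator_eq_indicator_norm]
    rw [hfe, integral_indicator measurableSet_Iic, hres1 τ hτ]
    have hae : ∀ᵐ α ∂(μ.restrict (Icc 0 τ)),
        ‖(1 - α)⁻¹ * quant W τ‖ = (1 - α)⁻¹ * ‖quant W τ‖ := by
      filter_upwards [ae_restrict_mem measurableSet_Icc] with α hα
      have h2 : (0:ℝ) < 1 - α := by linarith [hα.2, hτ.2]
      rw [norm_mul, Real.norm_eq_abs ((1 - α)⁻¹), abs_of_pos (inv_pos.mpr h2)]
    rw [integral_congr_ae hae, integral_mul_const]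
    rfl
  -- Hölder integrability
  have hHolder : Integrable (fun τ => Tmap μ τ * ‖quant W τ‖) stdP :=
    integrable_mul_of_memLp (by rw [add_comm]; exact hpq) hTμ hqℒp.norm
  -- integrability of the kernel on the product
  have hGint : Integrable G (μ.prod stdP) := by
    rw [integrable_prod_iff' hGm]
    constructor
    · filter_upwards [ae_mem_Ioo_stdP] with τ hτ
      exact hIntα τ hτ
    · refine hHolder.congr ?_
      filter_upwards [ae_mem_Ioo_stdP] with τ hτ
      exact (hnorm_eq τ hτ).symm
  -- Fubini
  have hswap : (∫ α, ∫ τ, G (α, τ) ∂stdP ∂μ) = ∫ τ, ∫ α, G (α, τ) ∂μ ∂stdP :=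
    integral_integral_swap hGint
  -- left-hand side
  have hL : kusuokaIntegral μ Z = ∫ α, ∫ τ, G (α, τ) ∂stdP ∂μ := by
    rw [kusuokaIntegral]
    refine integral_congr_ae ?_
    filter_upwards [hαae] with α hα
    rw [hG_right α, integral_indicator measurableSet_Ici, hres2 α hα, integral_const_mul]
    simp only [avar, hquant]
  -- right-hand side
  have hR : spectralIntegral (Tmap μ) Z = ∫ τ, ∫ α, G (α, τ) ∂μ ∂stdP := by
    rw [spectralIntegral, hquant, ← stdP_eq_Ioo]
    refine integral_congr_ae ?_
    filter_upwards [ae_mem_Ioo_stdP] with τ hτ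
    rw [hG_left τ, integral_indicator measurableSet_Iic, hres1 τ hτ, integral_mul_const]
    rfl
  rw [hL, hR]
  exact hswap

end
end

section
/- Let ρ : L_p([0,1]) → ℝ be a law invariant coherent risk measure with dual set 𝔄. Then the set Exp(𝔄) of weak* exposed points of 𝔄 and its weak* closure are invariant under the group 𝔉 of measure-preserving transformations of [0,1]: if ζ ∈ Exp(𝔄) and T ∈ 𝔉 then ζ∘T ∈ Exp(𝔄), and likewise for the weak* closure of Exp(𝔄). -/
open MeasureTheory Set Filter Topology
open scoped ENNReal

noncomputable section

section Aux

lemma stdP_eq_inter (A : Set ℝ) (hA : MeasurableSet A) : stdP A = stdP (A ∩ Icc (0:ℝ) 1) := by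
  simp [stdP, Measure.restrict_apply, hA, hA.inter measurableSet_Icc, inter_assoc]

variable (e : ℝ ≃ᵐ ℝ)

lemma mpAux.pairing_comp (he : MeasurePreserving e stdP stdP) (ζ Z : ℝ → ℝ) :
    pairing (ζ ∘ e) (Z ∘ e) = pairing ζ Z :=
  he.integral_comp' (fun τ => ζ τ * Z τ)

lemma mpAux.pairing_comp_left (he : MeasurePreserving e stdP stdP) (ζ Z : ℝ → ℝ) :
    pairing (ζ ∘ e) Z = pairing ζ (Z ∘ e.symm) := by
  have h1 : pairing (ζ ∘ e) Z = ∫ ω, (fun τ => ζ τ * Z (e.symm τ)) (e ω) ∂stdP := by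
    unfold pairing; congr 1; funext ω; simp
  rw [h1, he.integral_comp' (fun τ => ζ τ * Z (e.symm τ))]; rfl

lemma mpAux.memLp_comp (he : MeasurePreserving e stdP stdP) {Z : ℝ → ℝ} {r : ℝ≥0∞}
    (hZ : MemLp Z r stdP) : MemLp (Z ∘ e) r stdP :=
  hZ.comp_measurePreserving he

lemma mpAux.cdf_comp (he : MeasurePreserving e stdP stdP) (Z : ℝ → ℝ) :
    cdf (Z ∘ e) = cdf Z := by
  funext z
  have h : {ω | (Z ∘ e) ω ≤ z} = e ⁻¹' {ω | Z ω ≤ z} := rfl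
  rw [cdf, h, ← MeasurableEquiv.map_apply, he.map_eq]; rfl

lemma mpAux.dualSet_comp (p q : ℝ≥0∞) (ρ : (ℝ → ℝ) → ℝ) (hρl : IsLawInvariant p ρ)
    (he : MeasurePreserving e stdP stdP) {ζ : ℝ → ℝ}
    (hζ : ζ ∈ dualSet p q ρ) : (ζ ∘ e) ∈ dualSet p q ρ := by
  have hes : MeasurePreserving e.symm stdP stdP := he.symm e
  refine ⟨mpAux.memLp_comp e he hζ.1, fun Z hZ => ?_⟩
  have hZ' : MemLp (Z ∘ e.symm) p stdP := mpAux.memLp_comp e.symm hes hZ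
  calc pairing (ζ ∘ e) Z = pairing ζ (Z ∘ e.symm) := mpAux.pairing_comp_left e he ζ Z
    _ ≤ ρ (Z ∘ e.symm) := hζ.2 _ hZ'
    _ = ρ Z := hρl _ _ hZ' hZ (mpAux.cdf_comp e.symm hes Z)

lemma mpAux.comp_symm_comp (ζ₁ : ℝ → ℝ) : (ζ₁ ∘ e.symm) ∘ e = ζ₁ := by
  funext ω; simp

lemma mpAux.exposes_comp (p q : ℝ≥0∞) (ρ : (ℝ → ℝ) → ℝ) (hρl : IsLawInvariant p ρ)
    (he : MeasurePreserving e stdP stdP) {Z ζ : ℝ → ℝ}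
    (hE : Exposes (dualSet p q ρ) Z ζ) : Exposes (dualSet p q ρ) (Z ∘ e) (ζ ∘ e) := by
  have hes : MeasurePreserving e.symm stdP stdP := he.symm e
  refine ⟨mpAux.dualSet_comp e p q ρ hρl he hE.1, ?_, ?_⟩
  · intro ζ₁ hζ₁
    have h1 : pairing ζ₁ (Z ∘ e) = pairing (ζ₁ ∘ e.symm) Z := by
      conv_lhs => rw [← mpAux.comp_symm_comp e ζ₁]
      rw [mpAux.pairing_comp e he]
    rw [h1, mpAux.pairing_comp e he]
    exact hE.2.1 _ (mpAux.dualSet_comp e.symm p q ρ hρl hes hζ₁)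
  · intro ζ₁ hζ₁ hpe
    have h1 : pairing ζ₁ (Z ∘ e) = pairing (ζ₁ ∘ e.symm) Z := by
      conv_lhs => rw [← mpAux.comp_symm_comp e ζ₁]
      rw [mpAux.pairing_comp e he]
    rw [h1, mpAux.pairing_comp e he] at hpe
    have h2 : (ζ₁ ∘ e.symm) =ᵐ[stdP] ζ :=
      hE.2.2 _ (mpAux.dualSet_comp e.symm p q ρ hρl hes hζ₁) hpe
    have h3 : (ζ₁ ∘ e.symm) ∘ e =ᵐ[stdP] ζ ∘ e := by
      apply MeasureTheory.ae_eq_comp he.aemeasurable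
      rwa [he.map_eq]
    rw [mpAux.comp_symm_comp e ζ₁] at h3
    exact h3

lemma mpAux.pairing_congr {ζ ζ' : ℝ → ℝ} (h : ζ =ᵐ[stdP] ζ') (Z : ℝ → ℝ) :
    pairing ζ Z = pairing ζ' Z := by
  unfold pairing
  exact integral_congr_ae (h.mono fun ω hω => by dsimp only; rw [hω])

lemma mpAux.dualSet_congr (p q : ℝ≥0∞) (ρ : (ℝ → ℝ) → ℝ) {ζ ζ' : ℝ → ℝ}
    (hζ : ζ ∈ dualSet p q ρ) (h : ζ =ᵐ[stdP] ζ') : ζ' ∈ dualSet p q ρ :=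
  ⟨hζ.1.ae_eq h, fun Z hZ => (mpAux.pairing_congr h.symm Z) ▸ hζ.2 Z hZ⟩

lemma mpAux.exposes_congr (p q : ℝ≥0∞) (ρ : (ℝ → ℝ) → ℝ) {Z ζ ζ' : ℝ → ℝ}
    (hE : Exposes (dualSet p q ρ) Z ζ) (h : ζ =ᵐ[stdP] ζ') :
    Exposes (dualSet p q ρ) Z ζ' := by
  refine ⟨mpAux.dualSet_congr p q ρ hE.1 h, ?_, ?_⟩
  · intro ζ₁ hζ₁
    rw [← mpAux.pairing_congr h Z]; exact hE.2.1 _ hζ₁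
  · intro ζ₁ hζ₁ hpe
    rw [← mpAux.pairing_congr h Z] at hpe
    exact (hE.2.2 _ hζ₁ hpe).trans h

end Aux


/-- `Exp(𝔄)` and its weak* closure are invariant under the group of
measure-preserving transformations of `[0,1]`. -/
theorem expPoints_invariant_under_measure_preserving
    (p q : ℝ≥0∞) (hp : 1 ≤ p) (hp' : p ≠ ∞) (hpq : 1 / p + 1 / q = 1)
    (ρ : (ℝ → ℝ) → ℝ) (hρc : IsCoherent p ρ) (hρl : IsLawInvariant p ρ)
    (T : ℝ → ℝ) (hT : IsMPT T) :
    (∀ ζ ∈ expPoints p (dualSet p q ρ), (ζ ∘ T) ∈ expPoints p (dualSet p q ρ)) ∧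
    (∀ ζ ∈ wstarClosure p (expPoints p (dualSet p q ρ)),
      (ζ ∘ T) ∈ wstarClosure p (expPoints p (dualSet p q ρ))) := by
  classical
  obtain ⟨hTm, hTbij, hTpres⟩ := hT
  -- A globally bijective modification of `T`
  set Tp : ℝ → ℝ := fun ω => if ω ∈ Icc (0:ℝ) 1 then T ω else ω with hTp_def
  have hTpmeas : Measurable Tp := Measurable.ite measurableSet_Icc hTm measurable_id
  have hinj : Function.Injective Tp := by
    intro a b hab
    by_cases ha : a ∈ Icc (0:ℝ) 1 <;> by_cases hb : b ∈ Icc (0:ℝ) 1 <;>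
      simp only [hTp_def, ha, hb, if_pos, if_neg, if_true, if_false] at hab
    · exact hTbij.injOn ha hb hab
    · exact absurd (hab ▸ hTbij.mapsTo ha) hb
    · exact absurd (hab ▸ hTbij.mapsTo hb) ha
    · exact hab
  have hsurj : Function.Surjective Tp := by
    intro y
    by_cases hy : y ∈ Icc (0:ℝ) 1
    · obtain ⟨x, hx, hTx⟩ := hTbij.surjOn hy
      refine ⟨x, ?_⟩
      show (if x ∈ Icc (0:ℝ) 1 then T x else x) = y
      rw [if_pos hx]; exact hTx
    · refine ⟨y, ?_⟩
      show (if y ∈ Icc (0:ℝ) 1 then T y else y) = y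
      rw [if_neg hy]
  have hemb : MeasurableEmbedding Tp := hTpmeas.measurableEmbedding hinj
  set e : ℝ ≃ᵐ ℝ :=
    { toEquiv := Equiv.ofBijective Tp ⟨hinj, hsurj⟩
      measurable_toFun := hTpmeas
      measurable_invFun := by
        intro s hs
        have : (Equiv.ofBijective Tp ⟨hinj, hsurj⟩).symm ⁻¹' s = Tp '' s := by
          rw [← Equiv.image_eq_preimage_symm]; rfl
        rw [this]
        exact hemb.measurableSet_image.2 hs } with he_def
  have he_coe : ∀ ω, e ω = Tp ω := fun ω => rfl
  -- e is measure preserving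
  have hIccc : stdP (Icc (0:ℝ) 1)ᶜ = 0 := by
    simp [stdP, Measure.restrict_apply measurableSet_Icc.compl]
  have he : MeasurePreserving e stdP stdP := by
    refine ⟨e.measurable, ?_⟩
    ext s hs
    rw [Measure.map_apply e.measurable hs]
    set B : Set ℝ := e ⁻¹' s ∩ Icc (0:ℝ) 1 with hB_def
    have hBm : MeasurableSet B := (e.measurable hs).inter measurableSet_Icc
    have h1 : stdP (e ⁻¹' s) = stdP B := stdP_eq_inter _ (e.measurable hs)
    have h2 : T '' B = s ∩ Icc (0:ℝ) 1 := by
      ext y; constructor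
      · rintro ⟨x, ⟨hxs, hxI⟩, rfl⟩
        have hex : e x = T x := by
          rw [he_coe]; show (if x ∈ Icc (0:ℝ) 1 then T x else x) = T x; rw [if_pos hxI]
        exact ⟨hex ▸ hxs, hTbij.mapsTo hxI⟩
      · rintro ⟨hys, hyI⟩
        obtain ⟨x, hxI, hTx⟩ := hTbij.surjOn hyI
        have hex : e x = T x := by
          rw [he_coe]; show (if x ∈ Icc (0:ℝ) 1 then T x else x) = T x; rw [if_pos hxI]
        exact ⟨x, ⟨by rw [mem_preimage, hex, hTx]; exact hys, hxI⟩, hTx⟩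
    rw [h1, ← hTpres B hBm, h2, ← stdP_eq_inter s hs]
  have hes : MeasurePreserving e.symm stdP stdP := he.symm e
  -- ζ ∘ T = ζ ∘ e  a.e.
  have haemem : ∀ᵐ ω ∂stdP, ω ∈ Icc (0:ℝ) 1 := by
    rw [ae_iff]; exact hIccc
  have haeq : ∀ ζ : ℝ → ℝ, (ζ ∘ e) =ᵐ[stdP] (ζ ∘ T) := by
    intro ζ
    filter_upwards [haemem] with ω hω
    have : e ω = T ω := by
      rw [he_coe]; show (if ω ∈ Icc (0:ℝ) 1 then T ω else ω) = T ω; rw [if_pos hω]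
    simp [this, Function.comp]
  -- Part 1
  have part1 : ∀ ζ ∈ expPoints p (dualSet p q ρ), (ζ ∘ T) ∈ expPoints p (dualSet p q ρ) := by
    intro ζ hζ
    obtain ⟨Z, hZ, hE⟩ := hζ
    exact ⟨Z ∘ e, mpAux.memLp_comp e he hZ,
      mpAux.exposes_congr p q ρ (mpAux.exposes_comp e p q ρ hρl he hE) (haeq ζ)⟩
  refine ⟨part1, ?_⟩
  -- Part 2 : continuity of ζ ↦ ζ ∘ T in the weak* topology
  letI : TopologicalSpace (ℝ → ℝ) := wstarTop p
  have hcont : Continuous (fun ζ : ℝ → ℝ => ζ ∘ T) := by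
    have hc : Continuous[wstarTop p, wstarTop p] (fun ζ : ℝ → ℝ => ζ ∘ T) := by
      unfold wstarTop
      refine continuous_induced_rng.2 (continuous_pi fun Z => ?_)
      show Continuous[TopologicalSpace.induced _ _, _]
        fun ζ : ℝ → ℝ => pairing (ζ ∘ T) Z.1
      have key : (fun ζ : ℝ → ℝ => pairing (ζ ∘ T) Z.1) =
          (fun g : {Z : ℝ → ℝ // MemLp Z p stdP} → ℝ =>
            g ⟨Z.1 ∘ e.symm, mpAux.memLp_comp e.symm hes Z.2⟩) ∘
          (fun ζ => fun Z : {Z : ℝ → ℝ // MemLp Z p stdP} => pairing ζ Z.1) := by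
        funext ζ
        show pairing (ζ ∘ T) Z.1 = pairing ζ (Z.1 ∘ e.symm)
        rw [← mpAux.pairing_congr (haeq ζ) Z.1, mpAux.pairing_comp_left e he]
      rw [key]
      exact (continuous_apply _).comp continuous_induced_dom
    exact hc
  have hsub : (fun ζ : ℝ → ℝ => ζ ∘ T) '' expPoints p (dualSet p q ρ) ⊆
      expPoints p (dualSet p q ρ) := by
    rintro _ ⟨ζ₁, hζ₁, rfl⟩; exact part1 ζ₁ hζ₁
  intro ζ hζ
  rw [wstarClosure] at hζ ⊢
  exact closure_mono hsub (image_closure_subset_closure_image hcont ⟨ζ, hζ, rfl⟩)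

end
end

section
/- Let μ_1, μ_2 ∈ 𝔓_q with μ_1 dominated in first stochastic order by μ_2 (μ_1(α) ≥ μ_2(α) for all α). Then 𝕋μ_1 is majorized by 𝕋μ_2: ∫_γ^1 (𝕋μ_1)(t)dt ≤ ∫_γ^1 (𝕋μ_2)(t)dt for all γ ∈ [0,1], and ∫₀¹(𝕋μ_1)(t)dt = ∫₀¹(𝕋μ_2)(t)dt. -/
open MeasureTheory Set Filter Topology
open scoped ENNReal

noncomputable section

def gfun (γ α : ℝ) : ℝ := min 1 ((1 - γ) * (1 - α)⁻¹)

lemma gfun_measurable (γ : ℝ) : Measurable (gfun γ) :=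
  measurable_const.min (((measurable_const.sub measurable_id).inv).const_mul _)

lemma P01_ae {μ : Measure ℝ} (h : IsP01 μ) : ∀ᵐ α ∂μ, α ∈ Ico (0:ℝ) 1 := by
  have h0 : μ ((Icc (0:ℝ) 1)ᶜ ∪ {1}) = 0 := measure_union_null h.2.1 h.2.2
  have hsub : (Ico (0:ℝ) 1)ᶜ ⊆ (Icc (0:ℝ) 1)ᶜ ∪ {1} := by
    intro x hx
    by_cases hx1 : x ∈ Icc (0:ℝ) 1
    · right
      simp only [mem_Ico, not_and, not_lt, mem_compl_iff] at hx
      have := hx hx1.1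
      exact le_antisymm hx1.2 this
    · exact Or.inl hx1
  have : μ (Ico (0:ℝ) 1)ᶜ = 0 := measure_mono_null hsub h0
  rw [ae_iff]
  convert this using 2
  rfl

lemma measure_Ici_one {μ : Measure ℝ} (h : IsP01 μ) : μ (Ici (1:ℝ)) = 0 := by
  have hsub : Ici (1:ℝ) ⊆ {1} ∪ (Icc (0:ℝ) 1)ᶜ := by
    intro x hx
    rcases eq_or_lt_of_le (mem_Ici.mp hx) with h'|h'
    · exact Or.inl (by simp [h'.symm])
    · exact Or.inr (by simp [mem_Icc]; intro; linarith)
  exact measure_mono_null hsub (measure_union_null h.2.2 h.2.1)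

lemma superlevel_empty {γ s : ℝ} (hs : 1 ≤ s) : {α : ℝ | s < gfun γ α} = ∅ := by
  rw [Set.eq_empty_iff_forall_notMem]
  intro α hα
  have h1 : gfun γ α ≤ 1 := min_le_left _ _
  simp only [mem_setOf_eq] at hα
  linarith

lemma superlevel_eq {γ s : ℝ} (hγ1 : γ < 1) (hs0 : 0 < s) (hs1 : s < 1) :
    {α : ℝ | s < gfun γ α} = Ioi (1 - (1 - γ) / s) ∩ Iio 1 := by
  ext α
  simp only [mem_setOf_eq, mem_inter_iff, mem_Ioi, mem_Iio, gfun, lt_min_iff]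
  constructor
  · rintro ⟨-, h2⟩
    have hinv : 0 < (1 - α)⁻¹ := by
      rcases lt_trichotomy (1 - α) 0 with h|h|h
      · exfalso; nlinarith [inv_nonpos.mpr h.le]
      · exfalso; rw [h] at h2; simp at h2; linarith
      · exact inv_pos.mpr h
    have hα1 : α < 1 := by
      have := inv_pos.mp hinv; linarith
    refine ⟨?_, hα1⟩
    have h1α : 0 < 1 - α := by linarith
    have h2' : s < (1 - γ) / (1 - α) := by rw [div_eq_mul_inv]; exact h2
    have hsa : s * (1 - α) < 1 - γ := (lt_div_iff₀ h1α).mp h2'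
    have : 1 - α < (1 - γ) / s := (lt_div_iff₀ hs0).mpr (by linarith [hsa])
    linarith
  · rintro ⟨h1, h2⟩
    have h1α : 0 < 1 - α := by linarith
    refine ⟨hs1, ?_⟩
    have hlt : 1 - α < (1 - γ) / s := by linarith
    have : s * (1 - α) < 1 - γ := by
      rw [mul_comm, ← lt_div_iff₀ hs0]; exact hlt
    calc s = s * (1 - α) * (1 - α)⁻¹ := by field_simp
    _ < (1 - γ) * (1 - α)⁻¹ := by
        apply mul_lt_mul_of_pos_right this (inv_pos.mpr h1α)

lemma measure_Ioi_inter_Iio {μ : Measure ℝ} (h : IsP01 μ) (c : ℝ) :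
    μ (Ioi c ∩ Iio 1) = μ (Ioi c) := by
  apply le_antisymm (measure_mono inter_subset_left)
  calc μ (Ioi c) ≤ μ ((Ioi c ∩ Iio 1) ∪ Ici 1) := by
        apply measure_mono
        intro x hx
        rcases lt_or_ge x 1 with h'|h'
        · exact Or.inl ⟨hx, h'⟩
        · exact Or.inr h'
  _ ≤ μ (Ioi c ∩ Iio 1) + μ (Ici 1) := measure_union_le _ _
  _ = μ (Ioi c ∩ Iio 1) := by rw [measure_Ici_one h, add_zero]

lemma measure_Ioi_mono {μ1 μ2 : Measure ℝ} (h1 : IsP01 μ1) (h2 : IsP01 μ2)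
    (hfsd : FSD μ1 μ2) (c : ℝ) : μ1 (Ioi c) ≤ μ2 (Ioi c) := by
  haveI := h1.1; haveI := h2.1
  have hle : μ2 (Iic c) ≤ μ1 (Iic c) := by
    have := hfsd c
    rw [mcdf, mcdf] at this
    exact (ENNReal.toReal_le_toReal (measure_ne_top _ _) (measure_ne_top _ _)).mp this
  have e1 : μ1 (Ioi c) = 1 - μ1 (Iic c) := by
    rw [← compl_Iic, measure_compl measurableSet_Iic (measure_ne_top _ _), measure_univ]
  have e2 : μ2 (Ioi c) = 1 - μ2 (Iic c) := by
    rw [← compl_Iic, measure_compl measurableSet_Iic (measure_ne_top _ _), measure_univ]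
  rw [e1, e2]
  exact tsub_le_tsub_left hle 1

lemma lintegral_gfun_mono {μ1 μ2 : Measure ℝ} (h1 : IsP01 μ1) (h2 : IsP01 μ2)
    (hfsd : FSD μ1 μ2) {γ : ℝ} (hγ0 : 0 ≤ γ) (hγ1 : γ < 1) :
    ∫⁻ α, ENNReal.ofReal (gfun γ α) ∂μ1 ≤ ∫⁻ α, ENNReal.ofReal (gfun γ α) ∂μ2 := by
  have hnn : ∀ {μ : Measure ℝ}, IsP01 μ → 0 ≤ᵐ[μ] gfun γ := by
    intro μ h
    filter_upwards [P01_ae h] with α hα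
    have : (0:ℝ) ≤ (1 - γ) * (1 - α)⁻¹ := by
      apply mul_nonneg (by linarith) (inv_nonneg.mpr (by linarith [hα.2]))
    exact le_min one_pos.le this
  rw [lintegral_eq_lintegral_meas_lt μ1 (hnn h1) (gfun_measurable γ).aemeasurable,
      lintegral_eq_lintegral_meas_lt μ2 (hnn h2) (gfun_measurable γ).aemeasurable]
  apply lintegral_mono_ae
  rw [ae_restrict_iff' measurableSet_Ioi]
  apply ae_of_all
  intro s hs
  rcases lt_or_ge s 1 with hs1|hs1
  · rw [superlevel_eq hγ1 hs hs1, measure_Ioi_inter_Iio h1, measure_Ioi_inter_Iio h2]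
    exact measure_Ioi_mono h1 h2 hfsd _
  · rw [superlevel_empty hs1]; simp

lemma integral_Tmap_eq {μ : Measure ℝ} (h : IsP01 μ)
    (hint : Integrable (Tmap μ) stdP) {γ : ℝ} (hγ0 : 0 ≤ γ) (hγ1 : γ < 1) :
    ∫ t in Ioo γ 1, Tmap μ t = (∫⁻ α, ENNReal.ofReal (gfun γ α) ∂μ).toReal := by
  haveI : IsProbabilityMeasure μ := h.1
  have hsub : Ioo γ 1 ⊆ Icc (0:ℝ) 1 := fun t ht => ⟨le_of_lt (lt_of_le_of_lt hγ0 ht.1), ht.2.le⟩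
  have hintOn : IntegrableOn (Tmap μ) (Ioo γ 1) volume := by
    have := hint.restrict (s := Ioo γ 1)
    rwa [stdP, Measure.restrict_restrict measurableSet_Ioo, inter_eq_left.mpr hsub] at this
  have hnn : ∀ t ∈ Ioo γ 1, 0 ≤ Tmap μ t := by
    intro t ht
    apply setIntegral_nonneg measurableSet_Icc
    intro α hα
    exact inv_nonneg.mpr (by linarith [hα.2, ht.2])
  rw [MeasureTheory.integral_eq_lintegral_of_nonneg_ae
      ((ae_restrict_iff' measurableSet_Ioo).mpr (ae_of_all _ hnn)) hintOn.aestronglyMeasurable]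
  congr 1
  have step1 : ∫⁻ t in Ioo γ 1, ENNReal.ofReal (Tmap μ t)
      = ∫⁻ t in Ioo γ 1, ∫⁻ α, (Icc (0:ℝ) t).indicator
          (fun α => ENNReal.ofReal (1-α)⁻¹) α ∂μ := by
    apply lintegral_congr_ae
    rw [Filter.EventuallyEq, ae_restrict_iff' measurableSet_Ioo]
    apply ae_of_all
    intro t ht
    rw [lintegral_indicator measurableSet_Icc _]
    have hi : Integrable (fun α : ℝ => (1-α)⁻¹) (μ.restrict (Icc 0 t)) := by
      apply Integrable.mono' (integrable_const ((1-t)⁻¹))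
        ((measurable_id.const_sub 1).inv).aestronglyMeasurable
      rw [ae_restrict_iff' measurableSet_Icc]
      apply ae_of_all
      intro α hα
      have h1t : (0:ℝ) < 1 - t := by linarith [ht.2]
      have h1α : 1 - t ≤ 1 - α := by linarith [hα.2]
      simp only [id_eq]
      rw [Real.norm_eq_abs, abs_of_nonneg (inv_nonneg.mpr (by linarith))]
      exact inv_anti₀ h1t h1α
    have hn : 0 ≤ᵐ[μ.restrict (Icc 0 t)] (fun α : ℝ => (1-α)⁻¹) := by
      rw [Filter.EventuallyLE, ae_restrict_iff' measurableSet_Icc]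
      apply ae_of_all
      intro α hα
      exact inv_nonneg.mpr (by linarith [hα.2, ht.2])
    exact ofReal_integral_eq_lintegral_ofReal hi hn
  rw [step1]
  have hmeas : AEMeasurable (fun p : ℝ × ℝ =>
      (Icc (0:ℝ) p.1).indicator (fun α => ENNReal.ofReal (1-α)⁻¹) p.2)
      ((volume.restrict (Ioo γ 1)).prod μ) := by
    have key : (fun p : ℝ × ℝ =>
        (Icc (0:ℝ) p.1).indicator (fun α => ENNReal.ofReal (1-α)⁻¹) p.2)
        = {p : ℝ × ℝ | 0 ≤ p.2 ∧ p.2 ≤ p.1}.indicator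
            (fun p => ENNReal.ofReal (1-p.2)⁻¹) := by
      funext p
      simp [Set.indicator_apply, mem_Icc, mem_setOf_eq]
    rw [key]
    apply Measurable.aemeasurable
    apply Measurable.indicator
    · exact ENNReal.measurable_ofReal.comp ((measurable_const.sub measurable_snd).inv)
    · have : {p : ℝ × ℝ | 0 ≤ p.2 ∧ p.2 ≤ p.1}
          = {p : ℝ × ℝ | 0 ≤ p.2} ∩ {p : ℝ × ℝ | p.2 ≤ p.1} := rfl
      rw [this]
      exact (measurableSet_le measurable_const measurable_snd).inter
        (measurableSet_le measurable_snd measurable_fst)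
  rw [lintegral_lintegral_swap hmeas]
  apply lintegral_congr_ae
  filter_upwards [P01_ae h] with α hα
  have h1α : (0:ℝ) < 1 - α := by linarith [hα.2]
  have hrw : (fun t => (Icc (0:ℝ) t).indicator (fun α => ENNReal.ofReal (1-α)⁻¹) α)
      = (Ici α).indicator (fun _ => ENNReal.ofReal (1-α)⁻¹) := by
    funext t
    simp [Set.indicator_apply, mem_Icc, mem_Ici, hα.1]
  rw [hrw, lintegral_indicator measurableSet_Ici _,
      Measure.restrict_restrict measurableSet_Ici, setLIntegral_const]
  rcases le_or_gt α γ with hc|hc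
  · have hset : Ici α ∩ Ioo γ 1 = Ioo γ 1 :=
      inter_eq_right.mpr (fun t ht => le_trans hc ht.1.le)
    rw [hset, Real.volume_Ioo, ← ENNReal.ofReal_mul (inv_nonneg.mpr h1α.le)]
    congr 1
    have hle : (1-γ) * (1-α)⁻¹ ≤ 1 := by
      have : (1-γ) * (1-α)⁻¹ ≤ (1-α) * (1-α)⁻¹ :=
        mul_le_mul_of_nonneg_right (by linarith) (inv_nonneg.mpr h1α.le)
      rwa [mul_inv_cancel₀ h1α.ne'] at this
    rw [gfun, min_eq_right hle]
    ring
  · have hset : Ici α ∩ Ioo γ 1 = Ico α 1 := by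
      ext t
      simp only [mem_inter_iff, mem_Ici, mem_Ioo, mem_Ico]
      constructor
      · rintro ⟨ha, -, hb⟩; exact ⟨ha, hb⟩
      · rintro ⟨ha, hb⟩; exact ⟨ha, lt_of_lt_of_le hc ha, hb⟩
    rw [hset, Real.volume_Ico, ← ENNReal.ofReal_mul (inv_nonneg.mpr h1α.le)]
    congr 1
    have hge : (1:ℝ) ≤ (1-γ) * (1-α)⁻¹ := by
      have : (1-α) * (1-α)⁻¹ ≤ (1-γ) * (1-α)⁻¹ :=
        mul_le_mul_of_nonneg_right (by linarith) (inv_nonneg.mpr h1α.le)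
      rwa [mul_inv_cancel₀ h1α.ne'] at this
    rw [gfun, min_eq_left hge, inv_mul_cancel₀ h1α.ne']

/-- If `μ₁, μ₂ ∈ 𝔓_q` and `μ₁` is dominated in first stochastic order
by `μ₂`, then `𝕋μ₁` is majorized by `𝕋μ₂`. -/
theorem fsd_implies_majorization
    (q : ℝ≥0∞) (hq : 1 < q)
    (μ1 μ2 : Measure ℝ) (h1 : IsP01 μ1) (h2 : IsP01 μ2)
    (h1q : MemLp (Tmap μ1) q stdP) (h2q : MemLp (Tmap μ2) q stdP)
    (hfsd : FSD μ1 μ2) :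
    (∀ γ ∈ Icc (0:ℝ) 1, (∫ t in Ioo γ 1, Tmap μ1 t) ≤ ∫ t in Ioo γ 1, Tmap μ2 t) ∧
    (∫ t in Ioo (0:ℝ) 1, Tmap μ1 t) = ∫ t in Ioo (0:ℝ) 1, Tmap μ2 t := by
  haveI : IsFiniteMeasure stdP := by
    constructor
    rw [stdP, Measure.restrict_apply_univ]
    simp [Real.volume_Icc]
  have hint1 : Integrable (Tmap μ1) stdP := h1q.integrable hq.le
  have hint2 : Integrable (Tmap μ2) stdP := h2q.integrable hq.le
  have hbound : ∀ (μ : Measure ℝ) (γ : ℝ), IsP01 μ →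
      ∫⁻ α, ENNReal.ofReal (gfun γ α) ∂μ ≤ 1 := by
    intro μ γ h
    haveI : IsProbabilityMeasure μ := h.1
    calc ∫⁻ α, ENNReal.ofReal (gfun γ α) ∂μ ≤ ∫⁻ _, 1 ∂μ := by
          apply lintegral_mono
          intro α
          calc ENNReal.ofReal (gfun γ α) ≤ ENNReal.ofReal 1 :=
            ENNReal.ofReal_le_ofReal (min_le_left _ _)
          _ = 1 := ENNReal.ofReal_one
    _ = 1 := by simp
  constructor
  · intro γ hγ
    rcases eq_or_lt_of_le hγ.2 with he|hlt
    · rw [he, Ioo_self]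
      simp
    · rw [integral_Tmap_eq h1 hint1 hγ.1 hlt, integral_Tmap_eq h2 hint2 hγ.1 hlt]
      apply ENNReal.toReal_mono (ne_top_of_le_ne_top ENNReal.one_ne_top (hbound μ2 γ h2))
      exact lintegral_gfun_mono h1 h2 hfsd hγ.1 hlt
  · have key : ∀ (μ : Measure ℝ), IsP01 μ →
        ∫⁻ α, ENNReal.ofReal (gfun 0 α) ∂μ = 1 := by
      intro μ h
      haveI : IsProbabilityMeasure μ := h.1
      have heq : ∫⁻ α, ENNReal.ofReal (gfun 0 α) ∂μ = ∫⁻ _, 1 ∂μ := by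
        apply lintegral_congr_ae
        filter_upwards [P01_ae h] with α hα
        have h1α : (0:ℝ) < 1 - α := by linarith [hα.2]
        have hge : (1:ℝ) ≤ (1-(0:ℝ)) * (1-α)⁻¹ := by
          have := inv_anti₀ h1α (by linarith [hα.1] : 1 - α ≤ 1)
          rw [inv_one] at this
          calc (1:ℝ) ≤ (1-α)⁻¹ := this
          _ = (1-(0:ℝ)) * (1-α)⁻¹ := by ring
        rw [gfun, min_eq_left hge, ENNReal.ofReal_one]
      rw [heq]
      simp
    rw [integral_Tmap_eq h1 hint1 le_rfl one_pos, integral_Tmap_eq h2 hint2 le_rfl one_pos,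
        key μ1 h1, key μ2 h2]

end
end
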